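/- arXiv:1704.02237 — 2 statements merged into one kernel-verified Lean document; each statement's English description precedes it below -/
import Mathlib

section
/- For every integer m ≥ 3, the m×m rook's graph has the 3-extension property. -/
/-- A graph `G` has the `k`-extension property if for every two disjoint finite sets
`X`, `Y` of vertices with `|X ∪ Y| < k` there is a vertex `z ∉ X ∪ Y` adjacent to
every vertex of `X` and to no vertex of `Y`. -/
def HasExtensionProperty {V : Type} (G : SimpleGraph V) (k : ℕ) : Prop :=
  ∀ X Y : Finset V, Disjoint X Y → X.card + Y.card < k →
    ∃ z : V, z ∉ X ∧ z ∉ Y ∧ (∀ x ∈ X, G.Adj z x) ∧ (∀ y ∈ Y, ¬ G.Adj z y)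

/-- The `m × m` rook's graph: vertices are squares of an `m × m` board, two distinct
squares are adjacent iff they share a row or a column. -/
def rookGraph (m : ℕ) : SimpleGraph (Fin m × Fin m) where
  Adj p q := p ≠ q ∧ (p.1 = q.1 ∨ p.2 = q.2)
  symm := by
    constructor
    intro p q ⟨hne, h⟩
    exact ⟨hne.symm, by tauto⟩
  loopless := by constructor; intro p ⟨hne, _⟩; exact hne rfl

lemma fin_exists_not_mem {m : ℕ} (S : Finset (Fin m)) (h : S.card < m) : ∃ c, c ∉ S := by
  by_contra hc
  push_neg at hc
  have hsub : (Finset.univ : Finset (Fin m)) ⊆ S := fun x _ => hc x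
  have := Finset.card_le_card hsub
  simp [Finset.card_univ] at this
  omega

lemma fin_exists_ne_ne {m : ℕ} (hm : 3 ≤ m) (a b : Fin m) :
    ∃ c : Fin m, c ≠ a ∧ c ≠ b := by
  obtain ⟨c, hc⟩ := fin_exists_not_mem ({a, b} : Finset (Fin m))
    (lt_of_le_of_lt (Finset.card_insert_le _ _) (by simp; omega))
  simp only [Finset.mem_insert, Finset.mem_singleton, not_or] at hc
  exact ⟨c, hc.1, hc.2⟩

/-- For `m ≥ 3`, the `m × m` rook's graph has the 3-extension property. -/
theorem rookGraph_has_three_extension_property (m : ℕ) (hm : 3 ≤ m) :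
    HasExtensionProperty (rookGraph m) 3 := by
  intro X Y hdisj hcard
  have hXc : X.card = 0 ∨ X.card = 1 ∨ X.card = 2 := by omega
  rcases hXc with h | h | h
  · -- X empty
    have hXe : X = ∅ := Finset.card_eq_zero.mp h
    subst hXe
    obtain ⟨r, hr⟩ := fin_exists_not_mem (Y.image Prod.fst)
      (lt_of_le_of_lt Finset.card_image_le (by omega))
    obtain ⟨c, hc⟩ := fin_exists_not_mem (Y.image Prod.snd)
      (lt_of_le_of_lt Finset.card_image_le (by omega))
    refine ⟨(r, c), by simp, ?_, by simp, ?_⟩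
    · intro hmem
      exact hr (Finset.mem_image_of_mem _ hmem)
    · rintro y hy ⟨_, hadj | hadj⟩
      · exact hr (Finset.mem_image.mpr ⟨y, hy, hadj.symm⟩)
      · exact hc (Finset.mem_image.mpr ⟨y, hy, hadj.symm⟩)
  · -- X = {x}
    obtain ⟨x, rfl⟩ := Finset.card_eq_one.mp h
    have hYc : Y.card = 0 ∨ Y.card = 1 := by omega
    rcases hYc with hY | hY
    · have hYe : Y = ∅ := Finset.card_eq_zero.mp hY
      subst hYe
      obtain ⟨c, hc1, _⟩ := fin_exists_ne_ne hm x.2 x.2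
      refine ⟨(x.1, c), ?_, by simp, ?_, by simp⟩
      · simp only [Finset.mem_singleton]
        intro he
        exact hc1 (congrArg Prod.snd he)
      · intro v hv
        simp only [Finset.mem_singleton] at hv
        subst hv
        exact ⟨fun he => hc1 (congrArg Prod.snd he), Or.inl rfl⟩
    · obtain ⟨y, rfl⟩ := Finset.card_eq_one.mp hY
      have hxy : x ≠ y := Finset.disjoint_singleton.mp hdisj
      by_cases hrow : x.1 = y.1
      · -- same row, so columns differ; pick new row, same column as x
        have hcol : x.2 ≠ y.2 := by
          intro he
          exact hxy (Prod.ext hrow he)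
        obtain ⟨r, hr1, hr2⟩ := fin_exists_ne_ne hm x.1 y.1
        refine ⟨(r, x.2), ?_, ?_, ?_, ?_⟩
        · simp only [Finset.mem_singleton]
          intro he; exact hr1 (congrArg Prod.fst he)
        · simp only [Finset.mem_singleton]
          intro he; exact hr2 (congrArg Prod.fst he)
        · intro v hv
          simp only [Finset.mem_singleton] at hv; subst hv
          exact ⟨fun he => hr1 (congrArg Prod.fst he), Or.inr rfl⟩
        · intro v hv
          simp only [Finset.mem_singleton] at hv; subst hv
          rintro ⟨_, hadj | hadj⟩
          · exact hr2 hadj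
          · exact hcol hadj
      · -- rows differ; pick same row as x, column avoiding both
        obtain ⟨c, hc1, hc2⟩ := fin_exists_ne_ne hm x.2 y.2
        refine ⟨(x.1, c), ?_, ?_, ?_, ?_⟩
        · simp only [Finset.mem_singleton]
          intro he; exact hc1 (congrArg Prod.snd he)
        · simp only [Finset.mem_singleton]
          intro he; exact hrow ((Prod.ext_iff.mp he).1)
        · intro v hv
          simp only [Finset.mem_singleton] at hv; subst hv
          exact ⟨fun he => hc1 (congrArg Prod.snd he), Or.inl rfl⟩
        · intro v hv
          simp only [Finset.mem_singleton] at hv; subst hv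
          rintro ⟨_, hadj | hadj⟩
          · exact hrow hadj
          · exact hc2 hadj
  · -- X = {x₁, x₂}, Y = ∅
    obtain ⟨x1, x2, hne, rfl⟩ := Finset.card_eq_two.mp h
    have hYe : Y = ∅ := Finset.card_eq_zero.mp (by omega)
    subst hYe
    by_cases hrow : x1.1 = x2.1
    · obtain ⟨c, hc1, hc2⟩ := fin_exists_ne_ne hm x1.2 x2.2
      refine ⟨(x1.1, c), ?_, by simp, ?_, by simp⟩
      · simp only [Finset.mem_insert, Finset.mem_singleton, not_or]
        constructor
        · intro he; exact hc1 (congrArg Prod.snd he)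
        · intro he; exact hc2 (congrArg Prod.snd he)
      · intro v hv
        simp only [Finset.mem_insert, Finset.mem_singleton] at hv
        rcases hv with rfl | rfl
        · exact ⟨fun he => hc1 (congrArg Prod.snd he), Or.inl rfl⟩
        · exact ⟨fun he => hc2 (congrArg Prod.snd he), Or.inl hrow⟩
    · by_cases hcol : x1.2 = x2.2
      · obtain ⟨r, hr1, hr2⟩ := fin_exists_ne_ne hm x1.1 x2.1
        refine ⟨(r, x1.2), ?_, by simp, ?_, by simp⟩
        · simp only [Finset.mem_insert, Finset.mem_singleton, not_or]
          constructor
          · intro he; exact hr1 (congrArg Prod.fst he)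
          · intro he; exact hr2 (congrArg Prod.fst he)
        · intro v hv
          simp only [Finset.mem_insert, Finset.mem_singleton] at hv
          rcases hv with rfl | rfl
          · exact ⟨fun he => hr1 (congrArg Prod.fst he), Or.inr rfl⟩
          · exact ⟨fun he => hr2 (congrArg Prod.fst he), Or.inr hcol⟩
      · refine ⟨(x1.1, x2.2), ?_, by simp, ?_, by simp⟩
        · simp only [Finset.mem_insert, Finset.mem_singleton, not_or]
          constructor
          · intro he; exact hcol (congrArg Prod.snd he).symm
          · intro he; exact hrow ((Prod.ext_iff.mp he).1)
        · intro v hv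
          simp only [Finset.mem_insert, Finset.mem_singleton] at hv
          rcases hv with rfl | rfl
          · exact ⟨fun he => hcol (congrArg Prod.snd he).symm, Or.inl rfl⟩
          · exact ⟨fun he => hrow ((Prod.ext_iff.mp he).1), Or.inr rfl⟩
end

section
/- For all integers k ≥ 2 and s ≥ 1, there exists a finite simple graph H with chromatic number at most k that has the k-extension property and is s-connected. -/
open Finset Function

private lemma helper_poly (C d : ℕ) : ∃ q, 1 ≤ q ∧ C * q ^ d < 2 ^ q := by
  set c : ℕ := C + d + 2 with hc
  have hc2 : 2 ≤ c := by omega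
  refine ⟨c ^ 3, Nat.one_le_iff_ne_zero.mpr (by positivity), ?_⟩
  have h1 : C * (c ^ 3) ^ d < c ^ (3 * d + 1) := by
    rw [← pow_mul, pow_succ, mul_comm (c ^ (3*d)) c]
    have : C < c := by omega
    exact Nat.mul_lt_mul_of_lt_of_le this (le_refl _) (by positivity)
  have h2 : c ^ (3 * d + 1) ≤ c ^ (c * c) := by
    apply Nat.pow_le_pow_right (by omega)
    nlinarith [hc2]
  have h3 : c ^ (c * c) ≤ 2 ^ (c ^ 3) := by
    calc c ^ (c * c) ≤ (2 ^ c) ^ (c * c) :=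
          Nat.pow_le_pow_left (Nat.lt_two_pow_self (n := c)).le _
      _ = 2 ^ (c ^ 3) := by rw [← pow_mul]; ring_nf
  omega

private lemma two_mul_pow_le (a : ℕ) (ha : 1 ≤ a) : 2 * a ^ a ≤ (a + 1) ^ a := by
  have hb := add_pow a 1 a  -- (a+1)^a = ∑ i in range (a+1), a^i * 1^(a-i) * a.choose i
  rw [hb]
  have hsub : ({a - 1, a} : Finset ℕ) ⊆ Finset.range (a + 1) := by
    intro x hx
    simp only [Finset.mem_insert, Finset.mem_singleton] at hx
    rcases hx with h | h <;> simp [h] <;> omega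
  have hpair : ∑ i ∈ ({a - 1, a} : Finset ℕ), a ^ i * 1 ^ (a - i) * a.choose i
      = 2 * a ^ a := by
    rw [Finset.sum_pair (by omega : a - 1 ≠ a)]
    have h1 : a.choose (a - 1) = a := by
      have := Nat.choose_symm (by omega : 1 ≤ a)
      rw [this, Nat.choose_one_right]
    have h2 : a ^ (a - 1) * a = a ^ a := by
      rw [← pow_succ]; congr 1; omega
    simp only [h1, Nat.choose_self, one_pow, mul_one]
    omega
  calc 2 * a ^ a = ∑ i ∈ ({a - 1, a} : Finset ℕ), a ^ i * 1 ^ (a - i) * a.choose i := hpair.symm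
    _ ≤ ∑ i ∈ Finset.range (a + 1), a ^ i * 1 ^ (a - i) * a.choose i :=
        Finset.sum_le_sum_of_subset hsub

private lemma pow_gain (a q : ℕ) (ha : 1 ≤ a) :
    2 ^ q * a ^ (a * q) ≤ (a + 1) ^ (a * q) := by
  calc 2 ^ q * a ^ (a * q) = (2 * a ^ a) ^ q := by
        rw [mul_pow, ← pow_mul, mul_comm a q]
    _ ≤ ((a + 1) ^ a) ^ q := Nat.pow_le_pow_left (two_mul_pow_le a ha) q
    _ = (a + 1) ^ (a * q) := by rw [← pow_mul]


private lemma count_bad {B W T : Type} [Fintype B] [DecidableEq B] [Fintype W] [Fintype T]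
    (ι : W × T → B) (hι : Function.Injective ι) (b : T → Bool) :
    Fintype.card {f : B → Bool // ∀ w : W, ∃ t : T, f (ι (w, t)) ≠ b t}
      = (2 ^ Fintype.card T - 1) ^ Fintype.card W *
          2 ^ (Fintype.card B - Fintype.card W * Fintype.card T) := by
  classical
  set R : Set B := Set.range ι with hR
  let e1 : (B → Bool) ≃ ((R ⊕ ↥Rᶜ) → Bool) :=
    Equiv.arrowCongr (Equiv.Set.sumCompl R).symm (Equiv.refl Bool)
  let e2 : ((R ⊕ ↥Rᶜ) → Bool) ≃ ((R → Bool) × (↥Rᶜ → Bool)) :=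
    Equiv.sumArrowEquivProdArrow _ _ _
  let e3 : (R → Bool) ≃ (W × T → Bool) :=
    Equiv.arrowCongr (Equiv.ofInjective ι hι).symm (Equiv.refl Bool)
  let e4 : (R → Bool) ≃ (W → T → Bool) := e3.trans (Equiv.curry W T Bool)
  let E : (B → Bool) ≃ ((W → T → Bool) × (↥Rᶜ → Bool)) :=
    e1.trans (e2.trans (Equiv.prodCongr e4 (Equiv.refl _)))
  have hE : ∀ (f : B → Bool) (w : W) (t : T), (E f).1 w t = f (ι (w, t)) := by
    intro f w t
    simp only [E, e1, e2, e3, e4]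
    simp [Equiv.sumArrowEquivProdArrow, Equiv.curry]
    rfl
  have key : {f : B → Bool // ∀ w : W, ∃ t : T, f (ι (w, t)) ≠ b t} ≃
      ({g : W → T → Bool // ∀ w : W, ∃ t : T, g w t ≠ b t} × (↥Rᶜ → Bool)) := by
    refine (Equiv.subtypeEquiv E ?_).trans Equiv.prodSubtypeFstEquivSubtypeProd
    intro f
    constructor
    · intro h w; obtain ⟨t, ht⟩ := h w; exact ⟨t, by rw [hE]; exact ht⟩
    · intro h w; obtain ⟨t, ht⟩ := h w; exact ⟨t, by rw [← hE f w t]; exact ht⟩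
  rw [Fintype.card_congr key, Fintype.card_prod]
  have c1 : Fintype.card {g : W → T → Bool // ∀ w : W, ∃ t : T, g w t ≠ b t}
      = (2 ^ Fintype.card T - 1) ^ Fintype.card W := by
    have e5 : {g : W → T → Bool // ∀ w : W, ∃ t : T, g w t ≠ b t}
        ≃ (W → {h : T → Bool // h ≠ b}) := by
      refine (Equiv.subtypeEquiv (Equiv.refl _) ?_).trans (Equiv.subtypePiEquivPi)
      intro g
      simp only [Equiv.refl_apply]
      constructor
      · intro h w; rw [Function.ne_iff]; exact h w
      · intro h w; have := h w; rw [Function.ne_iff] at this; exact this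
    rw [Fintype.card_congr e5, Fintype.card_pi]
    have : Fintype.card {h : T → Bool // h ≠ b} = 2 ^ Fintype.card T - 1 := by
      rw [Fintype.card_subtype_compl, Fintype.card_subtype_eq, Fintype.card_fun,
        Fintype.card_bool]
    simp [this]
  have c2 : Fintype.card (↥Rᶜ → Bool)
      = 2 ^ (Fintype.card B - Fintype.card W * Fintype.card T) := by
    rw [Fintype.card_fun, Fintype.card_bool]
    congr 1
    rw [Fintype.card_compl_set]
    congr 1
    rw [← Fintype.card_prod]
    exact Fintype.card_congr (Equiv.ofInjective ι hι).symm
  rw [c1, c2]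




private lemma card_part (k m : ℕ) (c : Fin k) :
    ((univ : Finset (Fin k × Fin m)).filter (fun v => v.1 = c)).card = m := by
  classical
  have e : {v : Fin k × Fin m // v.1 = c} ≃ Fin m :=
    ⟨fun v => v.1.2, fun i => ⟨(c, i), rfl⟩, by rintro ⟨⟨a', b'⟩, rfl⟩; rfl, fun i => rfl⟩
  rw [← Fintype.card_subtype, Fintype.card_congr e, Fintype.card_fin]

private lemma exists_good_f (k s q m : ℕ) (hk : 2 ≤ k) (hs : 1 ≤ s) (hq1 : 1 ≤ q)
    (hm : m = s + 1 + (2 ^ k - 1) * q)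
    (hq : (k * (max k (s + 1) + 1) ^ 3 *
        (k * (s + 1 + (2 ^ k - 1))) ^ (3 * max k (s + 1))) * q ^ (3 * max k (s + 1))
        < 2 ^ q) :
    ∃ f : Sym2 (Fin k × Fin m) → Bool, ∀ (c : Fin k) (X Y F : Finset (Fin k × Fin m)),
      (∀ u ∈ X, u.1 ≠ c) → (∀ u ∈ Y, u.1 ≠ c) → Disjoint X Y → X.card + Y.card = k →
      (∀ u ∈ F, u.1 = c) → F.card = s + 1 →
      ∃ z : Fin k × Fin m, z.1 = c ∧ z ∉ F ∧ (∀ u ∈ X, f s(z, u) = true) ∧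
        (∀ u ∈ Y, f s(z, u) = false) := by
  classical
  set a : ℕ := 2 ^ k - 1 with ha_def
  have ha1 : 1 ≤ a := by
    have h4 : (4:ℕ) ≤ 2 ^ k := by
      calc (4:ℕ) = 2 ^ 2 := rfl
        _ ≤ 2 ^ k := Nat.pow_le_pow_right (by norm_num) hk
    omega
  have haa : a + 1 = 2 ^ k := by
    have : 1 ≤ 2 ^ k := Nat.one_le_two_pow
    omega
  set K₀ : ℕ := max k (s + 1) with hK₀def
  have hm1 : s + 1 ≤ m := by omega
  set cardB : ℕ := Fintype.card (Sym2 (Fin k × Fin m)) with hBdef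
  set w₀ : ℕ := m - (s + 1) with hw₀def
  have hw₀q : w₀ = a * q := by omega
  set Q : ℕ := (2 ^ k - 1) ^ w₀ * 2 ^ (cardB - w₀ * k) with hQdef
  set N : ℕ := k * m with hNdef
  have hNcard : Fintype.card (Fin k × Fin m) = N := by simp [hNdef]
  have hNB : N ≤ cardB := by
    rw [← hNcard, hBdef]
    apply Fintype.card_le_of_injective (fun v => s(v, v))
    intro u v huv
    rw [Sym2.eq_iff] at huv
    tauto
  have hw₀k : w₀ * k ≤ cardB := by
    calc w₀ * k ≤ m * k := Nat.mul_le_mul_right k (by omega)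
      _ = N := by rw [hNdef, mul_comm]
      _ ≤ cardB := hNB
  by_contra hcon
  push_neg at hcon
  -- tuple bookkeeping
  set TU := Fin k × Finset (Fin k × Fin m) × Finset (Fin k × Fin m) × Finset (Fin k × Fin m)
    with hTU
  set VAL : Finset TU := univ.filter (fun τ =>
    (∀ u ∈ τ.2.1, u.1 ≠ τ.1) ∧ (∀ u ∈ τ.2.2.1, u.1 ≠ τ.1) ∧ Disjoint τ.2.1 τ.2.2.1 ∧
      τ.2.1.card + τ.2.2.1.card = k ∧ (∀ u ∈ τ.2.2.2, u.1 = τ.1) ∧ τ.2.2.2.card = s + 1)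
    with hVAL
  set P : TU → (Sym2 (Fin k × Fin m) → Bool) → Prop := fun τ f =>
    ∀ z : Fin k × Fin m, z.1 = τ.1 → z ∉ τ.2.2.2 →
      ∃ u ∈ τ.2.1 ∪ τ.2.2.1, f s(z, u) ≠ decide (u ∈ τ.2.1) with hP
  have cover : (univ : Finset (Sym2 (Fin k × Fin m) → Bool)) ⊆
      VAL.biUnion (fun τ => univ.filter (fun f => P τ f)) := by
    intro f _
    obtain ⟨c, X, Y, F, h1, h2, h3, h4, h5, h6, hbad⟩ := hcon f
    rw [Finset.mem_biUnion]
    refine ⟨(c, X, Y, F), ?_, ?_⟩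
    · rw [hVAL, mem_filter]
      exact ⟨mem_univ _, h1, h2, h3, h4, h5, h6⟩
    · rw [mem_filter]
      refine ⟨mem_univ _, ?_⟩
      intro z hz1 hz2
      by_cases hX : ∀ u ∈ X, f s(z, u) = true
      · obtain ⟨u, hu, hne⟩ := hbad z hz1 hz2 hX
        refine ⟨u, Finset.mem_union_right _ hu, ?_⟩
        have huX : u ∉ X := Finset.disjoint_right.mp h3 hu
        simp only [decide_eq_false huX]
        simpa using hne
      · push_neg at hX
        obtain ⟨u, hu, hne⟩ := hX
        refine ⟨u, Finset.mem_union_left _ hu, ?_⟩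
        simp only [decide_eq_true hu]
        simpa using hne
  -- per tuple bound
  have perTuple : ∀ τ ∈ VAL, ((univ : Finset (Sym2 (Fin k × Fin m) → Bool)).filter
      (fun f => P τ f)).card ≤ Q := by
    rintro ⟨c, X, Y, F⟩ hτ
    rw [hVAL, mem_filter] at hτ
    obtain ⟨-, h1, h2, h3, h4, h5, h6⟩ := hτ
    set Wf : Finset (Fin k × Fin m) := (univ.filter (fun v => v.1 = c)) \ F with hWf
    set T : Finset (Fin k × Fin m) := X ∪ Y with hT
    have hFsub : F ⊆ univ.filter (fun v => v.1 = c) := by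
      intro u hu
      rw [mem_filter]
      exact ⟨mem_univ _, h5 u hu⟩
    have hWcard : Wf.card = w₀ := by
      rw [hWf, Finset.card_sdiff_of_subset hFsub, card_part, h6]
    have hTcard : T.card = k := by
      rw [hT, Finset.card_union_of_disjoint h3, h4]
    have hWfc : ∀ u ∈ Wf, u.1 = c := by
      intro u hu
      rw [hWf, mem_sdiff, mem_filter] at hu
      exact hu.1.2
    have hTc : ∀ u ∈ T, u.1 ≠ c := by
      intro u hu
      rw [hT, Finset.mem_union] at hu
      rcases hu with hu | hu
      · exact h1 u hu
      · exact h2 u hu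
    set ι : ↥Wf × ↥T → Sym2 (Fin k × Fin m) := fun p => s((p.1 : Fin k × Fin m), (p.2 : Fin k × Fin m)) with hι
    have hιinj : Function.Injective ι := by
      rintro ⟨⟨w1, hw1⟩, ⟨t1, ht1⟩⟩ ⟨⟨w2, hw2⟩, ⟨t2, ht2⟩⟩ h
      rw [hι] at h
      simp only at h
      rw [Sym2.eq_iff] at h
      rcases h with ⟨hww, htt⟩ | ⟨hwt, htw⟩
      · simp only [Prod.mk.injEq, Subtype.mk.injEq]
        exact ⟨hww, htt⟩
      · exfalso
        exact hTc t2 ht2 (by rw [← hwt]; exact hWfc w1 hw1)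
    set b : ↥T → Bool := fun t => decide ((t : Fin k × Fin m) ∈ X) with hb
    have hcount := count_bad ι hιinj b
    have hiff : ∀ f : Sym2 (Fin k × Fin m) → Bool,
        (P (c, X, Y, F) f) ↔ (∀ w : ↥Wf, ∃ t : ↥T, f (ι (w, t)) ≠ b t) := by
      intro f
      constructor
      · intro h w
        have hw : (w : Fin k × Fin m) ∈ (univ.filter (fun v : Fin k × Fin m => v.1 = c)) \ F := w.2
        rw [mem_sdiff, mem_filter] at hw
        obtain ⟨u, hu, hne⟩ := h (w : Fin k × Fin m) hw.1.2 hw.2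
        exact ⟨⟨u, hu⟩, hne⟩
      · intro h z hz1 hz2
        have hzW : z ∈ Wf := by
          rw [hWf, mem_sdiff, mem_filter]
          exact ⟨⟨mem_univ _, hz1⟩, hz2⟩
        obtain ⟨t, ht⟩ := h ⟨z, hzW⟩
        exact ⟨(t : Fin k × Fin m), t.2, ht⟩
    have hcards : Fintype.card ↥Wf = w₀ ∧ Fintype.card ↥T = k := by
      constructor
      · rw [Fintype.card_coe, hWcard]
      · rw [Fintype.card_coe, hTcard]
    refine le_of_eq ?_
    calc ((univ : Finset (Sym2 (Fin k × Fin m) → Bool)).filter (fun f => P (c, X, Y, F) f)).card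
        = Fintype.card {f : Sym2 (Fin k × Fin m) → Bool // P (c, X, Y, F) f} :=
          (Fintype.card_subtype _).symm
      _ = Fintype.card {f : Sym2 (Fin k × Fin m) → Bool //
            ∀ w : ↥Wf, ∃ t : ↥T, f (ι (w, t)) ≠ b t} :=
          Fintype.card_congr (Equiv.subtypeEquiv (Equiv.refl _) (fun f => by
            simpa using hiff f))
      _ = (2 ^ Fintype.card ↥T - 1) ^ Fintype.card ↥Wf *
            2 ^ (Fintype.card (Sym2 (Fin k × Fin m)) - Fintype.card ↥Wf * Fintype.card ↥T) :=
          hcount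
      _ = Q := by rw [hcards.1, hcards.2, hQdef, hBdef]
  -- bound VAL.card
  set A : Finset (Finset (Fin k × Fin m)) :=
    (Finset.range (K₀ + 1)).biUnion (fun j => Finset.powersetCard j univ) with hA
  have hkK : k ≤ K₀ := le_max_left _ _
  have hsK : s + 1 ≤ K₀ := le_max_right _ _
  have hmemA : ∀ Z : Finset (Fin k × Fin m), Z.card ≤ K₀ → Z ∈ A := by
    intro Z hZ
    rw [hA, Finset.mem_biUnion]
    exact ⟨Z.card, Finset.mem_range.mpr (by omega),
      Finset.mem_powersetCard.mpr ⟨Finset.subset_univ _, rfl⟩⟩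
  have hNpos : 0 < N := by
    rw [hNdef]; exact Nat.mul_pos (by omega) (by omega)
  have hAcard : A.card ≤ (K₀ + 1) * N ^ K₀ := by
    calc A.card ≤ ∑ j ∈ Finset.range (K₀ + 1),
          (Finset.powersetCard j (univ : Finset (Fin k × Fin m))).card :=
        Finset.card_biUnion_le
      _ ≤ ∑ _j ∈ Finset.range (K₀ + 1), N ^ K₀ := by
          apply Finset.sum_le_sum
          intro j hj
          rw [Finset.card_powersetCard, Finset.card_univ, hNcard]
          calc N.choose j ≤ N ^ j := Nat.choose_le_pow N j
            _ ≤ N ^ K₀ := Nat.pow_le_pow_right hNpos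
                (by rw [Finset.mem_range] at hj; omega)
      _ = (K₀ + 1) * N ^ K₀ := by rw [Finset.sum_const, Finset.card_range, smul_eq_mul]
  have hVALsub : VAL ⊆ (univ : Finset (Fin k)) ×ˢ (A ×ˢ (A ×ˢ A)) := by
    rintro ⟨c, X, Y, F⟩ hτ
    rw [hVAL, mem_filter] at hτ
    obtain ⟨-, h1, h2, h3, h4, h5, h6⟩ := hτ
    have h4' : X.card + Y.card = k := h4
    have h6' : F.card = s + 1 := h6
    refine Finset.mem_product.mpr ⟨mem_univ _, Finset.mem_product.mpr
      ⟨hmemA X (by omega), Finset.mem_product.mpr ⟨hmemA Y (by omega), hmemA F (by omega)⟩⟩⟩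
  have hVALcard : VAL.card ≤ k * ((K₀ + 1) * N ^ K₀) ^ 3 := by
    calc VAL.card ≤ ((univ : Finset (Fin k)) ×ˢ (A ×ˢ (A ×ˢ A))).card :=
        Finset.card_le_card hVALsub
      _ = k * (A.card * (A.card * A.card)) := by
          rw [Finset.card_product, Finset.card_product, Finset.card_product,
            Finset.card_univ, Fintype.card_fin]
      _ ≤ k * (((K₀ + 1) * N ^ K₀) * (((K₀ + 1) * N ^ K₀) * ((K₀ + 1) * N ^ K₀))) :=
          Nat.mul_le_mul_left k (Nat.mul_le_mul hAcard (Nat.mul_le_mul hAcard hAcard))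
      _ = k * ((K₀ + 1) * N ^ K₀) ^ 3 := by ring
  have htotal : Fintype.card (Sym2 (Fin k × Fin m) → Bool) ≤ VAL.card * Q := by
    calc Fintype.card (Sym2 (Fin k × Fin m) → Bool)
        = (univ : Finset (Sym2 (Fin k × Fin m) → Bool)).card := Finset.card_univ.symm
      _ ≤ (VAL.biUnion (fun τ => univ.filter (fun f => P τ f))).card :=
          Finset.card_le_card cover
      _ ≤ ∑ τ ∈ VAL, ((univ.filter (fun f => P τ f))).card := Finset.card_biUnion_le
      _ ≤ VAL.card * Q := by
          have := Finset.sum_le_card_nsmul VAL _ Q perTuple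
          simpa [smul_eq_mul] using this
  have hΩ : Fintype.card (Sym2 (Fin k × Fin m) → Bool) = 2 ^ cardB := by
    rw [Fintype.card_fun, Fintype.card_bool, hBdef]
  have hapos : 0 < a ^ w₀ := Nat.pow_pos (by omega)
  have hNle : N ≤ (k * (s + 1 + a)) * q := by
    have hsq : s + 1 ≤ (s + 1) * q := Nat.le_mul_of_pos_right _ (by omega)
    have hadd : (s + 1 + a) * q = (s + 1) * q + a * q := by ring
    have hmq : s + 1 + a * q ≤ (s + 1 + a) * q := by omega
    calc N = k * m := hNdef
      _ = k * (s + 1 + a * q) := by rw [hm]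
      _ ≤ k * ((s + 1 + a) * q) := Nat.mul_le_mul_left _ hmq
      _ = (k * (s + 1 + a)) * q := by ring
  have hL : k * ((K₀ + 1) * N ^ K₀) ^ 3
      ≤ (k * (K₀ + 1) ^ 3 * (k * (s + 1 + a)) ^ (3 * K₀)) * q ^ (3 * K₀) := by
    have h1 : N ^ K₀ ≤ ((k * (s + 1 + a)) * q) ^ K₀ := Nat.pow_le_pow_left hNle _
    calc k * ((K₀ + 1) * N ^ K₀) ^ 3 = k * (K₀ + 1) ^ 3 * (N ^ K₀) ^ 3 := by ring
      _ ≤ k * (K₀ + 1) ^ 3 * (((k * (s + 1 + a)) * q) ^ K₀) ^ 3 :=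
          Nat.mul_le_mul_left _ (Nat.pow_le_pow_left h1 3)
      _ = (k * (K₀ + 1) ^ 3 * (k * (s + 1 + a)) ^ (3 * K₀)) * q ^ (3 * K₀) := by
          rw [← pow_mul, mul_pow, Nat.mul_comm K₀ 3]
          ring
  have hkey : k * ((K₀ + 1) * N ^ K₀) ^ 3 * a ^ w₀ < 2 ^ (w₀ * k) := by
    have hstep : k * ((K₀ + 1) * N ^ K₀) ^ 3 * a ^ w₀ < 2 ^ q * a ^ w₀ := by
      apply Nat.mul_lt_mul_of_lt_of_le _ (le_refl _) hapos
      calc k * ((K₀ + 1) * N ^ K₀) ^ 3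
          ≤ (k * (K₀ + 1) ^ 3 * (k * (s + 1 + a)) ^ (3 * K₀)) * q ^ (3 * K₀) := hL
        _ < 2 ^ q := hq
    calc k * ((K₀ + 1) * N ^ K₀) ^ 3 * a ^ w₀ < 2 ^ q * a ^ w₀ := hstep
      _ = 2 ^ q * a ^ (a * q) := by rw [hw₀q]
      _ ≤ (a + 1) ^ (a * q) := pow_gain a q ha1
      _ = (a + 1) ^ w₀ := by rw [hw₀q]
      _ = 2 ^ (w₀ * k) := by rw [haa, ← pow_mul, Nat.mul_comm k w₀]
  have hfinal : VAL.card * Q < 2 ^ cardB := by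
    have h2 : VAL.card * Q ≤ (k * ((K₀ + 1) * N ^ K₀) ^ 3) * Q :=
      Nat.mul_le_mul_right Q hVALcard
    have h3 : (k * ((K₀ + 1) * N ^ K₀) ^ 3) * Q
        = (k * ((K₀ + 1) * N ^ K₀) ^ 3 * a ^ w₀) * 2 ^ (cardB - w₀ * k) := by
      rw [hQdef, ← ha_def]
      ring
    have h4 : (k * ((K₀ + 1) * N ^ K₀) ^ 3 * a ^ w₀) * 2 ^ (cardB - w₀ * k)
        < 2 ^ (w₀ * k) * 2 ^ (cardB - w₀ * k) :=
      Nat.mul_lt_mul_of_lt_of_le hkey (le_refl _) (Nat.pow_pos (by norm_num))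
    have h5 : 2 ^ (w₀ * k) * 2 ^ (cardB - w₀ * k) = 2 ^ cardB := by
      rw [← pow_add]
      congr 1
      omega
    omega
  rw [hΩ] at htotal
  omega




private lemma exists_good (k s : ℕ) (hk : 2 ≤ k) (hs : 1 ≤ s) :
    ∃ (m : ℕ) (G : SimpleGraph (Fin k × Fin m)), s + 1 ≤ m ∧
      (∀ u v, G.Adj u v → u.1 ≠ v.1) ∧
      (∀ (c : Fin k) (X Y F : Finset (Fin k × Fin m)),
        (∀ u ∈ X, u.1 ≠ c) → (∀ u ∈ Y, u.1 ≠ c) → Disjoint X Y →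
        X.card + Y.card ≤ k → F.card ≤ s + 1 →
        ∃ z, z.1 = c ∧ z ∉ F ∧ (∀ u ∈ X, G.Adj z u) ∧ (∀ u ∈ Y, ¬ G.Adj z u)) := by
  classical
  obtain ⟨q, hq1, hq⟩ := helper_poly
    (k * (max k (s + 1) + 1) ^ 3 * (k * (s + 1 + (2 ^ k - 1))) ^ (3 * max k (s + 1)))
    (3 * max k (s + 1))
  set m : ℕ := s + 1 + (2 ^ k - 1) * q with hm
  have hm1 : s + 1 ≤ m := by omega
  have hm2 : 2 ≤ m := by omega
  set V := (Fin k × Fin m) with hV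
  have hN : Fintype.card V = k * m := by simp [hV]
  set N : ℕ := k * m with hNdef
  have hNpos : 0 < N := by positivity
  have hpart : ∀ c : Fin k, ((univ : Finset V).filter (fun v => v.1 = c)).card = m := by
    intro c
    have e : {v : V // v.1 = c} ≃ Fin m :=
      ⟨fun v => v.1.2, fun i => ⟨(c, i), rfl⟩, by rintro ⟨⟨a', b'⟩, rfl⟩; rfl, fun i => rfl⟩
    rw [← Fintype.card_subtype, Fintype.card_congr e, Fintype.card_fin]
  -- main counting step
  have main : ∃ f : Sym2 V → Bool, ∀ (c : Fin k) (X Y F : Finset V),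
      (∀ u ∈ X, u.1 ≠ c) → (∀ u ∈ Y, u.1 ≠ c) → Disjoint X Y → X.card + Y.card = k →
      (∀ u ∈ F, u.1 = c) → F.card = s + 1 →
      ∃ z : V, z.1 = c ∧ z ∉ F ∧ (∀ u ∈ X, f s(z, u) = true) ∧
        (∀ u ∈ Y, f s(z, u) = false) :=
    exists_good_f k s q m hk hs hq1 hm hq
  obtain ⟨f, hf⟩ := main
  refine ⟨m, ⟨fun u v => u.1 ≠ v.1 ∧ f s(u, v) = true, ?_, ?_⟩, hm1, fun u v h => h.1, ?_⟩
  · constructor; rintro u v ⟨h1, h2⟩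
    exact ⟨h1.symm, by rwa [Sym2.eq_swap]⟩
  · constructor; intro u h
    exact h.1 rfl
  · intro c X Y F hXc hYc hdisj hcard hF
    -- pad X
    set D : Finset V := (univ.filter (fun v : V => v.1 ≠ c)) \ Y with hD
    have hXD : X ⊆ D := by
      intro u hu
      rw [hD, mem_sdiff, mem_filter]
      exact ⟨⟨mem_univ _, hXc u hu⟩, Finset.disjoint_left.mp hdisj hu⟩
    have hDcard : k - Y.card ≤ D.card := by
      have h1 : ((univ : Finset V).filter (fun v : V => v.1 ≠ c)).card = N - m := by
        have := hpart c
        have h2 := Finset.card_filter_add_card_filter_not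
          (s := (univ : Finset V)) (p := fun v : V => v.1 = c)
        rw [Finset.card_univ, hN] at h2
        have h3 : ((univ : Finset V).filter (fun v : V => v.1 ≠ c))
            = ((univ : Finset V).filter (fun v : V => ¬ v.1 = c)) := by
          apply Finset.filter_congr
          intro x _
          simp [ne_eq]
        rw [h3]
        omega
      have h3 : N - m - Y.card ≤ D.card := by
        rw [hD]
        have := Finset.le_card_sdiff Y ((univ : Finset V).filter (fun v : V => v.1 ≠ c))
        omega
      have h4 : k + m ≤ k * m := by nlinarith
      omega
    obtain ⟨X', hXX', hX'D, hX'card⟩ :=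
      Finset.exists_subsuperset_card_eq hXD (by omega : X.card ≤ k - Y.card) hDcard
    have hX'c : ∀ u ∈ X', u.1 ≠ c := by
      intro u hu
      have := hX'D hu
      rw [hD, mem_sdiff, mem_filter] at this
      exact this.1.2
    have hX'Y : Disjoint X' Y := by
      rw [Finset.disjoint_left]
      intro u hu
      have := hX'D hu
      rw [hD, mem_sdiff] at this
      exact this.2
    have hX'sum : X'.card + Y.card = k := by
      rw [hX'card]
      omega
    -- pad F
    set F₀ : Finset V := F.filter (fun v => v.1 = c) with hF₀
    have hF₀sub : F₀ ⊆ (univ : Finset V).filter (fun v : V => v.1 = c) := by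
      intro u hu
      rw [hF₀, mem_filter] at hu
      rw [mem_filter]
      exact ⟨mem_univ _, hu.2⟩
    obtain ⟨F', hFF', hF'sub, hF'card⟩ := Finset.exists_subsuperset_card_eq hF₀sub
      (le_trans (Finset.card_le_card (Finset.filter_subset _ _)) hF)
      (by rw [hpart c]; omega)
    have hF'c : ∀ u ∈ F', u.1 = c := by
      intro u hu
      have := hF'sub hu
      rw [mem_filter] at this
      exact this.2
    obtain ⟨z, hz1, hz2, hz3, hz4⟩ := hf c X' Y F' hX'c hYc hX'Y hX'sum hF'c hF'card
    refine ⟨z, hz1, ?_, ?_, ?_⟩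
    · intro hzF
      exact hz2 (hFF' (by rw [hF₀, mem_filter]; exact ⟨hzF, hz1⟩))
    · intro u hu
      exact ⟨by rw [hz1]; exact (hXc u hu).symm, hz3 u (hXX' hu)⟩
    · intro u hu
      rintro ⟨-, hadj⟩
      rw [hz4 u hu] at hadj
      exact Bool.false_ne_true hadj


/-- A finite graph is `s`-connected if it has more than `s` vertices and removing any
set of fewer than `s` vertices leaves a connected induced subgraph. -/
def IsSConnected {V : Type} [Fintype V] (H : SimpleGraph V) (s : ℕ) : Prop :=
  s < Fintype.card V ∧ ∀ S : Set V, S.ncard < s → (H.induce Sᶜ).Connected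

theorem exists_highly_connected_small_chromatic_graph_with_extension_property
    (k s : ℕ) (hk : 2 ≤ k) (hs : 1 ≤ s) :
    ∃ (n : ℕ) (H : SimpleGraph (Fin n)),
      H.chromaticNumber ≤ k ∧ HasExtensionProperty H k ∧ IsSConnected H s := by
  classical
  obtain ⟨m, G, hm1, hGcol, hGG⟩ := exists_good k s hk hs
  set e : Fin k × Fin m ≃ Fin (k * m) := finProdFinEquiv with he
  set H : SimpleGraph (Fin (k * m)) := G.comap (fun x => e.symm x) with hH
  have hadj : ∀ x y : Fin (k * m), H.Adj x y ↔ G.Adj (e.symm x) (e.symm y) := by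
    intro x y
    rw [hH]
    simp [SimpleGraph.comap_adj]
  have hmemtrans : ∀ (A : Finset (Fin (k * m))) (w : Fin k × Fin m),
      w ∉ A.image (fun x => e.symm x) → e w ∉ A := by
    intro A w hw hmem
    exact hw (Finset.mem_image.mpr ⟨e w, hmem, by simp⟩)
  have hskm : s < k * m := by
    have h1 : m ≤ k * m := Nat.le_mul_of_pos_left m (by omega)
    omega
  refine ⟨k * m, H, ?_, ?_, ?_, ?_⟩
  · -- chromatic number
    have C : H.Coloring (Fin k) :=
      SimpleGraph.Coloring.mk (fun x => (e.symm x).1)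
        (fun hxy => hGcol _ _ ((hadj _ _).mp hxy))
    have := C.colorable.chromaticNumber_le
    rwa [Fintype.card_fin] at this
  · -- extension property
    intro X Y hdisj hcard
    set X' : Finset (Fin k × Fin m) := X.image (fun x => e.symm x) with hX'
    set Y' : Finset (Fin k × Fin m) := Y.image (fun x => e.symm x) with hY'
    have hinj : Function.Injective (fun x : Fin (k * m) => e.symm x) := e.symm.injective
    have hX'card : X'.card = X.card := Finset.card_image_of_injective _ hinj
    have hY'card : Y'.card = Y.card := Finset.card_image_of_injective _ hinj
    have hdisj' : Disjoint X' Y' := by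
      rw [hX', hY', Finset.disjoint_image hinj]
      exact hdisj
    set U : Finset (Fin k) := (X' ∪ Y').image Prod.fst with hU
    have hUcard : U.card < k := by
      have h1 : U.card ≤ (X' ∪ Y').card := Finset.card_image_le
      have h2 : (X' ∪ Y').card ≤ X'.card + Y'.card := Finset.card_union_le _ _
      omega
    have hc : ∃ c : Fin k, c ∉ U := by
      by_contra h
      push_neg at h
      have hsub : (univ : Finset (Fin k)) ⊆ U := fun c _ => h c
      have := Finset.card_le_card hsub
      rw [Finset.card_univ, Fintype.card_fin] at this
      omega
    obtain ⟨c, hc⟩ := hc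
    have hcolX : ∀ u ∈ X', u.1 ≠ c := by
      intro u hu heq
      exact hc (heq ▸ Finset.mem_image_of_mem Prod.fst (Finset.mem_union_left _ hu))
    have hcolY : ∀ u ∈ Y', u.1 ≠ c := by
      intro u hu heq
      exact hc (heq ▸ Finset.mem_image_of_mem Prod.fst (Finset.mem_union_right _ hu))
    obtain ⟨z, hz1, _, hz3, hz4⟩ := hGG c X' Y' ∅ hcolX hcolY hdisj' (by omega) (by simp)
    have hzX' : z ∉ X' := fun h => hc (hz1 ▸ Finset.mem_image_of_mem Prod.fst
      (Finset.mem_union_left _ h))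
    have hzY' : z ∉ Y' := fun h => hc (hz1 ▸ Finset.mem_image_of_mem Prod.fst
      (Finset.mem_union_right _ h))
    refine ⟨e z, ?_, ?_, ?_, ?_⟩
    · intro h
      exact hzX' (by rw [hX']; exact Finset.mem_image.mpr ⟨e z, h, by simp⟩)
    · intro h
      exact hzY' (by rw [hY']; exact Finset.mem_image.mpr ⟨e z, h, by simp⟩)
    · intro x hx
      rw [hadj]
      simp only [Equiv.symm_apply_apply]
      exact hz3 _ (Finset.mem_image_of_mem _ hx)
    · intro y hy
      rw [hadj]
      simp only [Equiv.symm_apply_apply]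
      exact hz4 _ (Finset.mem_image_of_mem _ hy)
  · -- s-connected: size
    simpa using hskm
  · -- s-connected: connectivity after deletion
    intro S hS
    have hScard : S.toFinset.card < s := by
      rw [← Set.ncard_eq_toFinset_card']
      exact hS
    set S' : Finset (Fin k × Fin m) := S.toFinset.image (fun x => e.symm x) with hS'
    have hS'card : S'.card < s := le_trans Finset.card_image_le (le_refl _) |>.trans_lt hScard
    have hmemS : ∀ w : Fin k × Fin m, w ∉ S' → e w ∈ Sᶜ := by
      intro w hw
      rw [Set.mem_compl_iff]
      intro hmem
      exact hw (Finset.mem_image.mpr ⟨e w, Set.mem_toFinset.mpr hmem, by simp⟩)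
    have hne : Nonempty ↥Sᶜ := by
      by_contra hempty
      rw [not_nonempty_iff] at hempty
      have hall : ∀ x : Fin (k * m), x ∈ S := by
        intro x
        by_contra hx
        exact hempty.elim ⟨x, hx⟩
      have hsub : (univ : Finset (Fin (k * m))) ⊆ S.toFinset := by
        intro x _
        exact Set.mem_toFinset.mpr (hall x)
      have := Finset.card_le_card hsub
      rw [Finset.card_univ, Fintype.card_fin] at this
      omega
    rw [SimpleGraph.connected_iff]
    refine ⟨?_, hne⟩
    -- adjacency lifting into the induced graph
    have hlift : ∀ (x y : Fin (k * m)) (hx : x ∈ Sᶜ) (hy : y ∈ Sᶜ),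
        G.Adj (e.symm x) (e.symm y) → (H.induce Sᶜ).Adj ⟨x, hx⟩ ⟨y, hy⟩ := by
      intro x y hx hy h
      simp only [SimpleGraph.comap_adj, Function.Embedding.coe_subtype]
      rw [hadj]
      exact h
    rintro ⟨u, hu⟩ ⟨v, hv⟩
    by_cases huv : u = v
    · subst huv
      rfl
    have huv' : e.symm u ≠ e.symm v := fun h => huv (e.symm.injective h)
    have huS' : e.symm u ∉ S' → True := fun _ => trivial
    by_cases hcase : (e.symm u).1 = (e.symm v).1
    · -- same colour: one intermediate vertex
      have hc : ∃ c : Fin k, (e.symm u).1 ≠ c := by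
        haveI : Nontrivial (Fin k) := Fin.nontrivial_iff_two_le.mpr hk
        rcases exists_ne (e.symm u).1 with ⟨c, hc⟩
        exact ⟨c, hc.symm⟩
      obtain ⟨c, hc⟩ := hc
      have hXcol : ∀ w ∈ ({e.symm u, e.symm v} : Finset (Fin k × Fin m)), w.1 ≠ c := by
        intro w hw
        rcases Finset.mem_insert.mp hw with h | h
        · rw [h]; exact hc
        · rw [Finset.mem_singleton.mp h, ← hcase]; exact hc
      obtain ⟨z, hz1, hz2, hz3, -⟩ := hGG c {e.symm u, e.symm v} ∅ S' hXcol (by simp)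
        (Finset.disjoint_empty_right _)
        (by
          have := Finset.card_insert_le (e.symm u) ({e.symm v} : Finset (Fin k × Fin m))
          rw [Finset.card_singleton] at this
          simpa using le_trans (by omega) hk)
        (by omega)
      have hzS : e z ∈ Sᶜ := hmemS z hz2
      have had1 : (H.induce Sᶜ).Adj ⟨u, hu⟩ ⟨e z, hzS⟩ := by
        apply hlift
        simp only [Equiv.symm_apply_apply]
        exact (hz3 _ (Finset.mem_insert_self _ _)).symm
      have had2 : (H.induce Sᶜ).Adj ⟨e z, hzS⟩ ⟨v, hv⟩ := by
        apply hlift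
        simp only [Equiv.symm_apply_apply]
        exact hz3 _ (Finset.mem_insert.mpr (Or.inr (Finset.mem_singleton_self _)))
      exact had1.reachable.trans had2.reachable
    · -- different colours: two intermediate vertices
      obtain ⟨w, hw1, hw2, hw3, -⟩ := hGG (e.symm v).1 {e.symm u} ∅ (insert (e.symm v) S')
        (by
          intro x hx
          rw [Finset.mem_singleton.mp hx]
          exact hcase)
        (by simp) (Finset.disjoint_empty_right _)
        (by rw [Finset.card_singleton, Finset.card_empty]; omega)
        (by
          have := Finset.card_insert_le (e.symm v) S'
          omega)
      have hwS' : w ∉ S' := fun h => hw2 (Finset.mem_insert.mpr (Or.inr h))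
      have hwv : w ≠ e.symm v := fun h => hw2 (h ▸ Finset.mem_insert_self _ _)
      obtain ⟨z, hz1, hz2, hz3, -⟩ := hGG (e.symm u).1 {w, e.symm v} ∅ (insert (e.symm u) S')
        (by
          intro x hx
          rcases Finset.mem_insert.mp hx with h | h
          · rw [h, hw1]
            exact fun hh => hcase hh.symm
          · rw [Finset.mem_singleton.mp h]
            exact fun hh => hcase hh.symm)
        (by simp) (Finset.disjoint_empty_right _)
        (by
          have := Finset.card_insert_le w ({e.symm v} : Finset (Fin k × Fin m))
          rw [Finset.card_singleton] at this
          simpa using le_trans (by omega) hk)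
        (by
          have := Finset.card_insert_le (e.symm u) S'
          omega)
      have hzS' : z ∉ S' := fun h => hz2 (Finset.mem_insert.mpr (Or.inr h))
      have hwS : e w ∈ Sᶜ := hmemS w hwS'
      have hzS : e z ∈ Sᶜ := hmemS z hzS'
      have had1 : (H.induce Sᶜ).Adj ⟨u, hu⟩ ⟨e w, hwS⟩ := by
        apply hlift
        simp only [Equiv.symm_apply_apply]
        exact (hw3 _ (Finset.mem_singleton_self _)).symm
      have had2 : (H.induce Sᶜ).Adj ⟨e w, hwS⟩ ⟨e z, hzS⟩ := by
        apply hlift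
        simp only [Equiv.symm_apply_apply]
        exact (hz3 _ (Finset.mem_insert_self _ _)).symm
      have had3 : (H.induce Sᶜ).Adj ⟨e z, hzS⟩ ⟨v, hv⟩ := by
        apply hlift
        simp only [Equiv.symm_apply_apply]
        exact hz3 _ (Finset.mem_insert.mpr (Or.inr (Finset.mem_singleton_self _)))
      exact (had1.reachable.trans had2.reachable).trans had3.reachable
end
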